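/- arXiv:math/0607254 — 2 statements merged into one kernel-verified Lean document; each statement's English description precedes it below -/
import Mathlib

section
/- Let M be the free monoid on the alphabet of positive integers {1, 2, 3, …}, with weight ω(n_1⋯n_r) = n_1 + ⋯ + n_r, and let C_n be the components of the Lazard right composition of (M, ω). In the monoid algebra ℚ[M], set Q_n = Σ_{w ∈ C_n} w and S_N = Σ_{w : ω(w) = N} w (both sums are finite). Then for every N ≥ 1: S_N = Σ Q_{n_1}^{e_1} · Q_{n_2}^{e_2} ⋯ Q_{n_r}^{e_r}, where the (finite) sum ranges over all r ≥ 1, all strictly increasing sequences n_1 < n_2 < ⋯ < n_r of positive integers and all exponents e_1, …, e_r ≥ 1 with n_1e_1 + ⋯ + n_re_r = N. (This is the specialization of the defining identity ∏→_{n≥1} (1 − t^n Q_n)^{-1} = Σ_N t^N S_N of the noncommutative Witt symmetric functions, and identifies the Q_n with the Lazard factorization F(Λ, ω) of the free monoid on the elementary symmetric functions.) -/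
/-- The weight of a word over the alphabet of positive integers: the sum of its
letters. -/
def FreeMonoid.wt (w : FreeMonoid ℕ+) : ℕ :=
  (w.toList.map (fun x : ℕ+ => (x : ℕ))).sum

/-- The sets `Z_n` of the Lazard right composition of the free monoid on the
positive integers, weighted by the sum of the letters: `Z_1` is the set of
single-letter words and `Z_{n+1} = (Z_n \ C_n)·C_n*` where
`C_n = {w ∈ Z_n : ω(w) = n}`.  (The value at `0` is junk, set to `∅`.) -/
def lazardZ : ℕ → Set (FreeMonoid ℕ+)
  | 0 => ∅
  | 1 => Set.range FreeMonoid.of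
  | (n + 2) =>
      {w | ∃ z ∈ lazardZ (n + 1), z.wt ≠ n + 1 ∧
        ∃ u ∈ Submonoid.closure {v | v ∈ lazardZ (n + 1) ∧ v.wt = n + 1}, w = z * u}

/-- The sets `C_n = {w ∈ Z_n : ω(w) = n}` of the Lazard right composition. -/
def lazardC (n : ℕ) : Set (FreeMonoid ℕ+) :=
  {w | w ∈ lazardZ n ∧ w.wt = n}

/-- The noncommutative Witt symmetric function `Q_n`, specialized in the monoid
algebra `ℚ[M]`: the (finite) sum of the words in `C_n`. -/
noncomputable def Q (n : ℕ) : MonoidAlgebra ℚ (FreeMonoid ℕ+) :=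
  ∑ᶠ w ∈ lazardC n, MonoidAlgebra.of ℚ (FreeMonoid ℕ+) w

local notation "M'" => FreeMonoid ℕ+

namespace LazardAux

open FreeMonoid

lemma wt_one : (1 : M').wt = 0 := rfl

lemma wt_mul (a b : M') : (a * b).wt = a.wt + b.wt := by
  simp [FreeMonoid.wt, toList_mul]

lemma wt_of (x : ℕ+) : (FreeMonoid.of x).wt = x := by
  simp [FreeMonoid.wt]

lemma wt_eq_zero {w : M'} : w.wt = 0 ↔ w = 1 := by
  constructor
  · intro h
    have : ∀ x ∈ w.toList, (x : ℕ+) = x → False := by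
      intro x hx _
      have : (x : ℕ) ∈ w.toList.map (fun x : ℕ+ => (x : ℕ)) := List.mem_map_of_mem hx
      have hpos : 0 < (x : ℕ) := x.pos
      have := List.sum_eq_zero_iff.mp ?_ _ this
      · omega
      · exact h
    cases hw : w.toList with
    | nil =>
      have : w = 1 := by
        have := congrArg FreeMonoid.ofList hw
        simpa using this
      exact this
    | cons a t =>
      exact absurd rfl (this a (by simp [hw]))
  · rintro rfl; rfl

lemma wt_prod (l : List M') : l.prod.wt = (l.map FreeMonoid.wt).sum := by
  induction l with
  | nil => rfl
  | cons a t ih => simp [wt_mul, ih]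

lemma prod_map_of (w : List ℕ+) : (w.map FreeMonoid.of).prod = FreeMonoid.ofList w := by
  induction w with
  | nil => rfl
  | cons a t ih => simp [ih]

/-- Words of a given weight form a finite set. -/
lemma finite_wt_eq : ∀ N : ℕ, {w : M' | w.wt = N}.Finite := by
  intro N
  induction N using Nat.strong_induction_on with
  | _ N ih =>
    rcases Nat.eq_zero_or_pos N with h0 | hpos
    · subst h0
      have : {w : M' | w.wt = 0} ⊆ {1} := by
        intro w hw; exact wt_eq_zero.mp hw
      exact (Set.finite_singleton 1).subset this
    · have hfin : ({a : ℕ+ | (a : ℕ) ≤ N}).Finite := by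
        have : ({a : ℕ+ | (a : ℕ) ≤ N}) = ((fun a : ℕ+ => (a : ℕ)) ⁻¹' Set.Iic N) := rfl
        rw [this]
        exact Set.Finite.preimage (Set.injOn_of_injective (fun a b h => PNat.coe_injective h)) (Set.finite_Iic N)
      have hsub : {w : M' | w.wt = N} ⊆
          ⋃ a ∈ {a : ℕ+ | (a : ℕ) ≤ N},
            (fun w : M' => FreeMonoid.of a * w) '' {w : M' | w.wt = N - (a : ℕ)} := by
        intro w hw
        have hwN : w.wt = N := hw
        have hw1 : w ≠ 1 := by
          intro h; subst h; rw [wt_one] at hwN; omega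
        cases hl : w.toList with
        | nil =>
          exact absurd (by simpa using congrArg FreeMonoid.ofList hl) hw1
        | cons a t =>
          have hw2 : w = FreeMonoid.of a * FreeMonoid.ofList t := by
            have := congrArg FreeMonoid.ofList hl
            simpa using this
          have hwt : (a : ℕ) + (FreeMonoid.ofList t).wt = N := by
            rw [hw2, wt_mul, wt_of] at hwN; exact hwN
          have haN : (a : ℕ) ≤ N := by
            omega
          refine Set.mem_biUnion (s := {a : ℕ+ | (a : ℕ) ≤ N}) haN
            ⟨FreeMonoid.ofList t, ?_, hw2.symm⟩
          simp only [Set.mem_setOf_eq]; omega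
      refine Set.Finite.subset (Set.Finite.biUnion hfin ?_) hsub
      intro a _
      have : N - (a : ℕ) < N := by have := a.pos; omega
      exact (ih _ this).image _

/-- A set of words is a code if lists over it are determined by their products. -/
def IsCode (S : Set M') : Prop :=
  ∀ l l' : List M', (∀ x ∈ l, x ∈ S) → (∀ x ∈ l', x ∈ S) → l.prod = l'.prod → l = l'

lemma letters_list {l : List M'} (hl : ∀ x ∈ l, ∃ a, x = FreeMonoid.of a) :
    l = l.prod.toList.map FreeMonoid.of := by
  induction l with
  | nil => rfl
  | cons x t ih =>
    obtain ⟨a, rfl⟩ := hl x (by simp)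
    have ht := ih (fun y hy => hl y (by simp [hy]))
    simp only [List.prod_cons]
    rw [FreeMonoid.toList_of_mul]
    simpa using ht

lemma isCode_Z1 : IsCode (Set.range (FreeMonoid.of : ℕ+ → M')) := by
  intro l l' hl hl' hprod
  have h1 := letters_list (l := l) (by intro x hx; exact (hl x hx).imp (fun a ha => ha.symm))
  have h2 := letters_list (l := l') (by intro x hx; exact (hl' x hx).imp (fun a ha => ha.symm))
  rw [h1, h2, hprod]

/-! ### Abstract bisection step -/

section Step

variable {Z B C : Set M'}

/-- Grouped lists: pairs of a `B`-element and a list of `C`-elements. -/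
def GroupedOK (B C : Set M') (G : List (M' × List M')) : Prop :=
  ∀ p ∈ G, p.1 ∈ B ∧ ∀ x ∈ p.2, x ∈ C

/-- Expansion of a grouped list into a flat list. -/
def expand (G : List (M' × List M')) : List M' :=
  (G.map fun p => p.1 :: p.2).flatten

/-- A list is `Good` if it is empty or starts with a `B`-element. -/
def Good (B : Set M') (y : List M') : Prop :=
  y = [] ∨ ∃ b t, y = b :: t ∧ b ∈ B

lemma expand_nil : expand [] = [] := rfl

lemma expand_cons (p : M' × List M') (G : List (M' × List M')) :
    expand (p :: G) = p.1 :: (p.2 ++ expand G) := by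
  simp [expand]

lemma expand_good {G : List (M' × List M')} (hG : GroupedOK B C G) : Good B (expand G) := by
  cases G with
  | nil => exact Or.inl rfl
  | cons p t =>
    right
    exact ⟨p.1, p.2 ++ expand t, expand_cons p t, (hG p (by simp)).1⟩

lemma expand_mem_Z (hB : B ⊆ Z) (hC : C ⊆ Z) {G : List (M' × List M')}
    (hG : GroupedOK B C G) : ∀ a ∈ expand G, a ∈ Z := by
  induction G with
  | nil => simp [expand_nil]
  | cons p t ih =>
    rw [expand_cons]
    intro a ha
    rcases List.mem_cons.mp ha with rfl | ha
    · exact hB (hG p (by simp)).1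
    · rcases List.mem_append.mp ha with ha | ha
      · exact hC ((hG p (by simp)).2 a ha)
      · exact ih (fun q hq => hG q (by simp [hq])) a ha

lemma prod_expand (G : List (M' × List M')) :
    (expand G).prod = (G.map fun p => p.1 * p.2.prod).prod := by
  induction G with
  | nil => rfl
  | cons p t ih =>
    rw [expand_cons]
    simp only [List.prod_cons, List.map_cons, List.prod_append]
    rw [← ih]
    simp [List.prod_append, mul_assoc]

lemma lemE (hBC : ∀ x, x ∈ B → x ∈ C → False) :
    ∀ (x x' y y' : List M'), (∀ a ∈ x, a ∈ C) → (∀ a ∈ x', a ∈ C) →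
    Good B y → Good B y' → x ++ y = x' ++ y' → x = x' ∧ y = y' := by
  intro x
  induction x with
  | nil =>
    intro x' y y' _ hx' hy hy' heq
    cases x' with
    | nil => simpa using heq
    | cons c t =>
      exfalso
      rcases hy with rfl | ⟨b, tb, rfl, hb⟩
      · simp at heq
      · simp at heq
        rcases heq with ⟨rfl, _⟩
        exact hBC b hb (hx' b (by simp))
  | cons a t ih =>
    intro x' y y' hx hx' hy hy' heq
    cases x' with
    | nil =>
      exfalso
      rcases hy' with rfl | ⟨b, tb, rfl, hb⟩
      · simp at heq
      · simp at heq
        rcases heq with ⟨rfl, _⟩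
        exact hBC a hb (hx a (by simp))
    | cons a' t' =>
      simp only [List.cons_append, List.cons.injEq] at heq
      obtain ⟨rfl, heq⟩ := heq
      obtain ⟨h1, h2⟩ := ih t' y y' (fun b hb => hx b (by simp [hb]))
        (fun b hb => hx' b (by simp [hb])) hy hy' heq
      exact ⟨by rw [h1], h2⟩

lemma lemS (hBC : ∀ x, x ∈ B → x ∈ C → False) :
    ∀ (G G' : List (M' × List M')) (x x' : List M'),
    (∀ a ∈ x, a ∈ C) → (∀ a ∈ x', a ∈ C) → GroupedOK B C G → GroupedOK B C G' →
    x ++ expand G = x' ++ expand G' → x = x' ∧ G = G' := by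
  intro G
  induction G with
  | nil =>
    intro G' x x' hx hx' hG hG' heq
    obtain ⟨rfl, h2⟩ := lemE hBC x x' (expand []) (expand G') hx hx'
      (expand_good hG) (expand_good hG') heq
    cases G' with
    | nil => exact ⟨rfl, rfl⟩
    | cons p t => rw [expand_nil, expand_cons] at h2; simp at h2
  | cons p t ih =>
    intro G' x x' hx hx' hG hG' heq
    obtain ⟨rfl, h2⟩ := lemE hBC x x' (expand (p :: t)) (expand G') hx hx'
      (expand_good hG) (expand_good hG') heq
    cases G' with
    | nil => rw [expand_nil, expand_cons] at h2; simp at h2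
    | cons q s =>
      rw [expand_cons, expand_cons] at h2
      simp only [List.cons.injEq] at h2
      obtain ⟨hpq, h3⟩ := h2
      obtain ⟨h4, h5⟩ := lemE hBC p.2 q.2 (expand t) (expand s)
        (hG p (by simp)).2 (hG' q (by simp)).2
        (expand_good (fun r hr => hG r (by simp [hr])))
        (expand_good (fun r hr => hG' r (by simp [hr]))) h3
      obtain ⟨_, h6⟩ := ih s [] [] (by simp) (by simp)
        (fun r hr => hG r (by simp [hr])) (fun r hr => hG' r (by simp [hr]))
        (by simpa using h5)
      refine ⟨rfl, ?_⟩
      rw [h6]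
      have : p = q := Prod.ext hpq h4
      rw [this]

/-- The next-level set in abstract form. -/
def stepSet (B C : Set M') : Set M' :=
  {w | ∃ z ∈ B, ∃ l : List M', (∀ x ∈ l, x ∈ C) ∧ w = z * l.prod}

lemma lemA (hZBC : ∀ z ∈ Z, z ∉ C → z ∈ B) :
    ∀ l : List M', (∀ x ∈ l, x ∈ Z) → ∃ (x : List M') (G : List (M' × List M')),
      (∀ a ∈ x, a ∈ C) ∧ GroupedOK B C G ∧
      x.prod * (G.map fun p => p.1 * p.2.prod).prod = l.prod := by
  intro l
  induction l with
  | nil => exact fun _ => ⟨[], [], by simp, by simp [GroupedOK], by simp⟩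
  | cons a t ih =>
    intro hl
    obtain ⟨x, G, hx, hG, hprod⟩ := ih (fun b hb => hl b (by simp [hb]))
    by_cases hc : a ∈ C
    · refine ⟨a :: x, G, ?_, hG, ?_⟩
      · intro b hb
        rcases List.mem_cons.mp hb with rfl | hb
        · exact hc
        · exact hx b hb
      · simp only [List.prod_cons, mul_assoc, hprod]
    · refine ⟨[], (a, x) :: G, by simp, ?_, ?_⟩
      · intro p hp
        rcases List.mem_cons.mp hp with rfl | hp
        · exact ⟨hZBC a (hl a (by simp)) hc, hx⟩
        · exact hG p hp
      · simp only [List.map_cons, List.prod_cons, List.prod_nil, one_mul, mul_assoc, hprod]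

lemma lemRep : ∀ ys : List M', (∀ y ∈ ys, y ∈ stepSet B C) →
    ∃ G : List (M' × List M'), GroupedOK B C G ∧
      G.map (fun p => p.1 * p.2.prod) = ys := by
  intro ys
  induction ys with
  | nil => exact fun _ => ⟨[], by simp [GroupedOK], rfl⟩
  | cons y t ih =>
    intro h
    obtain ⟨G, hG, hmap⟩ := ih (fun b hb => h b (by simp [hb]))
    obtain ⟨z, hz, l, hl, hy⟩ := h y (by simp)
    refine ⟨(z, l) :: G, ?_, ?_⟩
    · intro p hp
      rcases List.mem_cons.mp hp with rfl | hp
      · exact ⟨hz, hl⟩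
      · exact hG p hp
    · simp [hmap, hy.symm]

lemma lemBuniq (hcode : IsCode Z) (hB : B ⊆ Z) (hC : C ⊆ Z)
    (hBC : ∀ x, x ∈ B → x ∈ C → False)
    {x x' : List M'} {G G' : List (M' × List M')}
    (hx : ∀ a ∈ x, a ∈ C) (hx' : ∀ a ∈ x', a ∈ C)
    (hG : GroupedOK B C G) (hG' : GroupedOK B C G')
    (h : x.prod * (expand G).prod = x'.prod * (expand G').prod) :
    x = x' ∧ G = G' := by
  have h1 : (x ++ expand G).prod = (x' ++ expand G').prod := by
    simpa [List.prod_append] using h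
  have h2 : x ++ expand G = x' ++ expand G' := by
    refine hcode _ _ ?_ ?_ h1
    · intro a ha
      rcases List.mem_append.mp ha with ha | ha
      · exact hC (hx a ha)
      · exact expand_mem_Z hB hC hG a ha
    · intro a ha
      rcases List.mem_append.mp ha with ha | ha
      · exact hC (hx' a ha)
      · exact expand_mem_Z hB hC hG' a ha
  exact lemS hBC G G' x x' hx hx' hG hG' h2

/-- Main uniqueness: the `(C-list, stepSet-list)` decomposition of a product is unique. -/
lemma lemB' (hcode : IsCode Z) (hB : B ⊆ Z) (hC : C ⊆ Z)
    (hBC : ∀ x, x ∈ B → x ∈ C → False)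
    {x x' ys ys' : List M'}
    (hx : ∀ a ∈ x, a ∈ C) (hx' : ∀ a ∈ x', a ∈ C)
    (hys : ∀ y ∈ ys, y ∈ stepSet B C) (hys' : ∀ y ∈ ys', y ∈ stepSet B C)
    (h : x.prod * ys.prod = x'.prod * ys'.prod) : x = x' ∧ ys = ys' := by
  obtain ⟨G, hG, hmap⟩ := lemRep ys hys
  obtain ⟨G', hG', hmap'⟩ := lemRep ys' hys'
  have hps : ys.prod = (expand G).prod := by rw [prod_expand, hmap]
  have hps' : ys'.prod = (expand G').prod := by rw [prod_expand, hmap']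
  obtain ⟨h1, h2⟩ := lemBuniq hcode hB hC hBC hx hx' hG hG' (by rw [← hps, ← hps']; exact h)
  exact ⟨h1, by rw [← hmap, ← hmap', h2]⟩

lemma isCode_stepSet (hcode : IsCode Z) (hB : B ⊆ Z) (hC : C ⊆ Z)
    (hBC : ∀ x, x ∈ B → x ∈ C → False) : IsCode (stepSet B C) := by
  intro l l' hl hl' hprod
  exact (lemB' hcode hB hC hBC (x := []) (x' := []) (by simp) (by simp) hl hl'
    (by simpa using hprod)).2

lemma lemZlist (hB : B ⊆ Z) (hC : C ⊆ Z) {ys : List M'}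
    (hys : ∀ y ∈ ys, y ∈ stepSet B C) :
    ∃ zl : List M', (∀ z ∈ zl, z ∈ Z) ∧ zl.prod = ys.prod := by
  obtain ⟨G, hG, hmap⟩ := lemRep ys hys
  exact ⟨expand G, expand_mem_Z hB hC hG, by rw [prod_expand, hmap]⟩

end Step
lemma lazardZ_succ_eq (k : ℕ) :
    lazardZ (k + 2) = stepSet {z | z ∈ lazardZ (k + 1) ∧ z.wt ≠ k + 1} (lazardC (k + 1)) := by
  ext w
  constructor
  · rintro ⟨z, hz, hwt, u, hu, rfl⟩
    obtain ⟨l, hl, hlprod⟩ := Submonoid.exists_list_of_mem_closure hu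
    exact ⟨z, ⟨hz, hwt⟩, l, hl, by rw [hlprod]⟩
  · rintro ⟨z, ⟨hz, hwt⟩, l, hl, rfl⟩
    refine ⟨z, hz, hwt, l.prod, ?_, rfl⟩
    exact list_prod_mem (fun x hx => Submonoid.subset_closure (hl x hx))

lemma wt_lazardZ : ∀ n, 1 ≤ n → ∀ z ∈ lazardZ n, n ≤ z.wt := by
  intro n
  induction n with
  | zero => omega
  | succ k ih =>
    intro _ z hz
    rcases Nat.eq_zero_or_pos k with rfl | hk
    · obtain ⟨a, rfl⟩ := hz
      rw [wt_of]
      exact a.pos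
    · obtain ⟨m, rfl⟩ : ∃ m, k = m + 1 := ⟨k - 1, by omega⟩
      rw [lazardZ_succ_eq] at hz
      obtain ⟨z', ⟨hz', hwt⟩, l, hl, rfl⟩ := hz
      have h1 : m + 1 ≤ z'.wt := ih (by omega) z' hz'
      have : (z' * l.prod).wt = z'.wt + l.prod.wt := wt_mul _ _
      omega

lemma isCode_lazardZ : ∀ n, 1 ≤ n → IsCode (lazardZ n) := by
  intro n
  induction n with
  | zero => omega
  | succ k ih =>
    intro _
    rcases Nat.eq_zero_or_pos k with rfl | hk
    · exact isCode_Z1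
    · obtain ⟨m, rfl⟩ : ∃ m, k = m + 1 := ⟨k - 1, by omega⟩
      rw [lazardZ_succ_eq]
      refine isCode_stepSet (Z := lazardZ (m + 1)) (ih (by omega)) ?_ ?_ ?_
      · exact fun z hz => hz.1
      · exact fun z hz => hz.1
      · exact fun x hx hc => hx.2 hc.2

/-! ### The master decomposition theorem -/

def GoodDecomp (n : ℕ) (w : M') (p : (ℕ → List M') × List M') : Prop :=
  (∀ j, ∀ x ∈ p.1 j, x ∈ lazardC j) ∧
  (∀ j, j = 0 ∨ n ≤ j → p.1 j = []) ∧
  (∀ x ∈ p.2, x ∈ lazardZ n) ∧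
  ((List.range n).map (fun j => (p.1 j).prod)).prod * p.2.prod = w

lemma master : ∀ n, 1 ≤ n → ∀ w : M',
    ∃ p : (ℕ → List M') × List M', GoodDecomp n w p ∧ ∀ q, GoodDecomp n w q → q = p := by
  intro n
  induction n with
  | zero => omega
  | succ k ih =>
    intro _ w
    rcases Nat.eq_zero_or_pos k with rfl | hk
    · -- base case n = 1
      refine ⟨⟨fun _ => [], w.toList.map FreeMonoid.of⟩, ⟨?_, ?_, ?_, ?_⟩, ?_⟩
      · intro j x hx; simp at hx
      · intro j _; rfl
      · intro x hx
        simp only [List.mem_map] at hx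
        obtain ⟨a, _, rfl⟩ := hx
        exact ⟨a, rfl⟩
      · simp [prod_map_of]
      · rintro ⟨g, zl⟩ ⟨hg1, hg2, hg3, hg4⟩
        have hgz : g = fun _ => [] := by
          funext j
          exact hg2 j (by omega)
        subst hgz
        have hzl : zl.prod = w := by simpa using hg4
        have : zl = w.toList.map FreeMonoid.of := by
          refine isCode_Z1 _ _ hg3 ?_ ?_
          · intro x hx
            simp only [List.mem_map] at hx
            obtain ⟨a, _, rfl⟩ := hx
            exact ⟨a, rfl⟩
          · rw [hzl, prod_map_of]; simp
        rw [this]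
    · -- step case: n = k + 1 with k = m + 1 ≥ 1
      obtain ⟨m, rfl⟩ : ∃ m, k = m + 1 := ⟨k - 1, by omega⟩
      set n := m + 1 with hn
      have hB : {z | z ∈ lazardZ n ∧ z.wt ≠ n} ⊆ lazardZ n := fun z hz => hz.1
      have hC : lazardC n ⊆ lazardZ n := fun z hz => hz.1
      have hBC : ∀ x, x ∈ {z | z ∈ lazardZ n ∧ z.wt ≠ n} → x ∈ lazardC n → False :=
        fun x hx hc => hx.2 hc.2
      have hcode := isCode_lazardZ n (by omega)
      have hstep : lazardZ (n + 1) = stepSet {z | z ∈ lazardZ n ∧ z.wt ≠ n} (lazardC n) :=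
        lazardZ_succ_eq m
      obtain ⟨⟨f, zl⟩, ⟨hp1, hp2, hp3, hp4⟩, huniq⟩ := ih (by omega) w
      obtain ⟨x, G, hx, hG, hprod⟩ :=
        lemA (Z := lazardZ n) (B := {z | z ∈ lazardZ n ∧ z.wt ≠ n}) (C := lazardC n)
          (fun z hz hc => ⟨hz, fun hwt => hc ⟨hz, hwt⟩⟩) zl hp3
      set ys := G.map (fun p => p.1 * p.2.prod) with hys
      have hysmem : ∀ y ∈ ys, y ∈ lazardZ (n + 1) := by
        rw [hstep]
        intro y hy
        simp only [hys, List.mem_map] at hy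
        obtain ⟨p, hp, rfl⟩ := hy
        exact ⟨p.1, (hG p hp).1, p.2, (hG p hp).2, rfl⟩
      refine ⟨⟨Function.update f n x, ys⟩, ⟨?_, ?_, ?_, ?_⟩, ?_⟩
      · intro j y hy
        dsimp only at hy
        rcases eq_or_ne j n with rfl | hj
        · rw [Function.update_self] at hy; exact hx y hy
        · rw [Function.update_of_ne hj] at hy; exact hp1 j y hy
      · intro j hj
        have hjn : j ≠ n := by omega
        dsimp only
        rw [Function.update_of_ne hjn]
        exact hp2 j (by omega)
      · exact hysmem
      · dsimp only
        rw [List.range_succ]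
        simp only [List.map_append, List.prod_append, List.map_cons, List.map_nil,
          List.prod_cons, List.prod_nil, mul_one]
        rw [Function.update_self]
        have hpre : ((List.range n).map (fun j => (Function.update f n x j).prod)).prod =
            ((List.range n).map (fun j => (f j).prod)).prod := by
          congr 1
          refine List.map_congr_left ?_
          intro j hj
          rw [Function.update_of_ne (by simp at hj; omega)]
        rw [hpre, mul_assoc, hprod, hp4]
      · -- uniqueness
        rintro ⟨g, ys'⟩ ⟨hg1, hg2, hg3, hg4⟩
        -- build a level-n decomposition from (g, ys')
        obtain ⟨A, hA, hAprod⟩ := lemZlist hB hC (ys := ys') (by rw [← hstep]; exact hg3)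
        have hgn : ∀ y ∈ g n, y ∈ lazardZ n := fun y hy => hC (hg1 n y hy)
        have hgdec : GoodDecomp n w ⟨Function.update g n [], g n ++ A⟩ := by
          refine ⟨?_, ?_, ?_, ?_⟩
          · intro j y hy
            dsimp only at hy
            rcases eq_or_ne j n with rfl | hj
            · rw [Function.update_self] at hy; simp at hy
            · rw [Function.update_of_ne hj] at hy; exact hg1 j y hy
          · intro j hj
            dsimp only
            rcases eq_or_ne j n with rfl | hj'
            · exact Function.update_self n [] g
            · rw [Function.update_of_ne hj']; exact hg2 j (by omega)
          · intro y hy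
            rcases List.mem_append.mp hy with hy | hy
            · exact hgn y hy
            · exact hA y hy
          · dsimp only
            have hpre : ((List.range n).map (fun j => (Function.update g n [] j).prod)).prod =
                ((List.range n).map (fun j => (g j).prod)).prod := by
              congr 1
              refine List.map_congr_left ?_
              intro j hj
              rw [Function.update_of_ne (by simp at hj; omega)]
            rw [hpre, List.prod_append, hAprod]
            rw [List.range_succ] at hg4
            simp only [List.map_append, List.prod_append, List.map_cons, List.map_nil,
              List.prod_cons, List.prod_nil, mul_one] at hg4
            rw [← mul_assoc]
            exact hg4
        have heq1 := huniq _ hgdec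
        have hf : f = Function.update g n [] := (congrArg Prod.fst heq1).symm
        have hzl : zl = g n ++ A := (congrArg Prod.snd heq1).symm
        have hprods : x.prod * ys.prod = (g n).prod * ys'.prod := by
          rw [hprod, hzl, List.prod_append, hAprod]
        have hys'mem : ∀ y ∈ ys', y ∈ stepSet {z | z ∈ lazardZ n ∧ z.wt ≠ n} (lazardC n) := by
          rw [← hstep]; exact hg3
        have hysmem' : ∀ y ∈ ys, y ∈ stepSet {z | z ∈ lazardZ n ∧ z.wt ≠ n} (lazardC n) := by
          rw [← hstep]; exact hysmem
        obtain ⟨hxg, hysys⟩ := lemB' hcode hB hC hBC hx (fun y hy => hg1 n y hy)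
          hysmem' hys'mem hprods
        refine Prod.ext ?_ ?_
        · show g = Function.update f n x
          funext j
          rcases eq_or_ne j n with rfl | hj
          · rw [Function.update_self]; exact hxg.symm
          · rw [Function.update_of_ne hj, hf, Function.update_of_ne hj]
        · exact hysys.symm

/-! ### Consequences of the master theorem -/

lemma finite_lazardC (n : ℕ) : (lazardC n).Finite :=
  (finite_wt_eq n).subset (fun _ hw => hw.2)

lemma wt_prod_C {j : ℕ} : ∀ {l : List M'}, (∀ x ∈ l, x ∈ lazardC j) →
    l.prod.wt = j * l.length := by
  intro l
  induction l with
  | nil => intro _; simp [wt_one]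
  | cons a t ih =>
    intro h
    rw [List.prod_cons, wt_mul, (h a (by simp)).2, ih (fun x hx => h x (by simp [hx]))]
    simp [List.length_cons, Nat.mul_succ, Nat.mul_add]
    ring

lemma sum_range_eq_list (f : ℕ → ℕ) (n : ℕ) :
    ∑ j ∈ Finset.range n, f j = ((List.range n).map f).sum := by
  induction n with
  | zero => rfl
  | succ k ih => rw [Finset.sum_range_succ, List.range_succ]; simp [ih]

/-- `Pow n k` : products of `k` elements of `C_n`. -/
def Pow (n k : ℕ) : Set M' :=
  {w | ∃ l : List M', (∀ x ∈ l, x ∈ lazardC n) ∧ l.length = k ∧ l.prod = w}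

lemma wt_Pow {n k : ℕ} {w : M'} (hw : w ∈ Pow n k) : w.wt = n * k := by
  obtain ⟨l, hl, hlen, rfl⟩ := hw
  rw [wt_prod_C hl, hlen]

lemma finite_Pow (n k : ℕ) : (Pow n k).Finite :=
  (finite_wt_eq (n * k)).subset (fun _ hw => wt_Pow hw)

/-- `Wp e t` : products of a `C_1`-power, ..., `C_t`-power with multiplicities `e`. -/
def Wp (e : ℕ → ℕ) : ℕ → Set M'
  | 0 => {1}
  | (t + 1) => {w | ∃ a ∈ Wp e t, ∃ b ∈ Pow (t + 1) (e (t + 1)), w = a * b}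

/-- Witness predicate for membership in `Wp e t`. -/
def WpWitness (e : ℕ → ℕ) (t : ℕ) (w : M') (f : ℕ → List M') : Prop :=
  (∀ j, ∀ x ∈ f j, x ∈ lazardC j) ∧ (∀ j, j = 0 ∨ t + 1 ≤ j → f j = []) ∧
  (∀ j, 1 ≤ j → j ≤ t → (f j).length = e j) ∧
  ((List.range (t + 1)).map (fun j => (f j).prod)).prod = w

lemma WpWitness_unique {e e' : ℕ → ℕ} {t : ℕ} {w : M'} {f f' : ℕ → List M'}
    (h : WpWitness e t w f) (h' : WpWitness e' t w f') : f = f' := by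
  obtain ⟨p, _, huniq⟩ := master (t + 1) (by omega) w
  have h1 : GoodDecomp (t + 1) w (f, []) :=
    ⟨h.1, fun j hj => h.2.1 j hj, by simp, by simpa using h.2.2.2⟩
  have h2 : GoodDecomp (t + 1) w (f', []) :=
    ⟨h'.1, fun j hj => h'.2.1 j hj, by simp, by simpa using h'.2.2.2⟩
  have := (huniq _ h1).trans (huniq _ h2).symm
  exact congrArg Prod.fst this

lemma Wp_iff (e : ℕ → ℕ) : ∀ (t : ℕ) (w : M'),
    w ∈ Wp e t ↔ ∃ f : ℕ → List M', WpWitness e t w f := by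
  intro t
  induction t with
  | zero =>
    intro w
    constructor
    · rintro rfl
      exact ⟨fun _ => [], fun j x hx => by simp at hx, fun j _ => rfl,
        fun j h1 h2 => by omega, by simp⟩
    · rintro ⟨f, hf1, hf2, hf3, hf4⟩
      have h0 : f 0 = [] := hf2 0 (Or.inl rfl)
      have : w = 1 := by
        rw [← hf4]
        rw [show List.range (0 + 1) = [0] from rfl]
        simp [h0]
      exact this ▸ rfl
  | succ t ih =>
    intro w
    constructor
    · rintro ⟨a, ha, b, hb, rfl⟩
      obtain ⟨f, hf1, hf2, hf3, hf4⟩ := (ih a).mp ha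
      obtain ⟨l, hl, hlen, hlprod⟩ := hb
      refine ⟨Function.update f (t + 1) l, ?_, ?_, ?_, ?_⟩
      · intro j x hx
        rcases eq_or_ne j (t + 1) with rfl | hj
        · rw [Function.update_self] at hx; exact hl x hx
        · rw [Function.update_of_ne hj] at hx; exact hf1 j x hx
      · intro j hj
        have hj' : j ≠ t + 1 := by omega
        rw [Function.update_of_ne hj']
        exact hf2 j (by omega)
      · intro j h1 h2
        rcases eq_or_ne j (t + 1) with rfl | hj
        · rw [Function.update_self]; exact hlen
        · rw [Function.update_of_ne hj]; exact hf3 j h1 (by omega)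
      · rw [List.range_succ]
        simp only [List.map_append, List.prod_append, List.map_cons, List.map_nil,
          List.prod_cons, List.prod_nil, mul_one]
        rw [Function.update_self]
        have hpre : ((List.range (t + 1)).map
            (fun j => (Function.update f (t + 1) l j).prod)).prod =
            ((List.range (t + 1)).map (fun j => (f j).prod)).prod := by
          congr 1
          refine List.map_congr_left ?_
          intro j hj
          rw [Function.update_of_ne (by simp at hj; omega)]
        rw [hpre, hf4, hlprod]
    · rintro ⟨f, hf1, hf2, hf3, hf4⟩
      refine ⟨((List.range (t + 1)).map (fun j => (f j).prod)).prod, ?_,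
        (f (t + 1)).prod, ?_, ?_⟩
      · refine (ih _).mpr ⟨Function.update f (t + 1) [], ?_, ?_, ?_, ?_⟩
        · intro j x hx
          rcases eq_or_ne j (t + 1) with rfl | hj
          · rw [Function.update_self] at hx; simp at hx
          · rw [Function.update_of_ne hj] at hx; exact hf1 j x hx
        · intro j hj
          rcases eq_or_ne j (t + 1) with rfl | hj'
          · exact Function.update_self _ _ _
          · rw [Function.update_of_ne hj']; exact hf2 j (by omega)
        · intro j h1 h2
          rw [Function.update_of_ne (by omega)]
          exact hf3 j h1 (by omega)
        · congr 1
          refine List.map_congr_left ?_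
          intro j hj
          rw [Function.update_of_ne (by simp at hj; omega)]
      · exact ⟨f (t + 1), fun x hx => hf1 _ x hx, hf3 (t + 1) (by omega) (by omega), rfl⟩
      · rw [← hf4, List.range_succ]
        simp [List.prod_append]

lemma wt_Wp {e : ℕ → ℕ} : ∀ {t : ℕ} {w : M'}, w ∈ Wp e t →
    w.wt = ∑ j ∈ Finset.range (t + 1), j * e j := by
  intro t
  induction t with
  | zero => rintro w rfl; simp [wt_one]
  | succ t ih =>
    rintro w ⟨a, ha, b, hb, rfl⟩
    rw [wt_mul, ih ha, wt_Pow hb]; exact (Finset.sum_range_succ _ _).symm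

lemma finite_Wp (e : ℕ → ℕ) (t : ℕ) : (Wp e t).Finite :=
  (finite_wt_eq (∑ j ∈ Finset.range (t + 1), j * e j)).subset (fun _ hw => wt_Wp hw)

/-- Multiplying two sums of distinct words with injective multiplication. -/
lemma GH {P Qs R : Set M'} (hP : P.Finite) (hQ : Qs.Finite) (hR : R.Finite)
    (hmul : ∀ p ∈ P, ∀ q ∈ Qs, p * q ∈ R)
    (hsurj : ∀ r ∈ R, ∃ p ∈ P, ∃ q ∈ Qs, p * q = r)
    (hinj : ∀ p ∈ P, ∀ q ∈ Qs, ∀ p' ∈ P, ∀ q' ∈ Qs, p * q = p' * q' → p = p' ∧ q = q') :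
    (∑ᶠ w ∈ P, MonoidAlgebra.of ℚ M' w) * (∑ᶠ w ∈ Qs, MonoidAlgebra.of ℚ M' w) =
      ∑ᶠ w ∈ R, MonoidAlgebra.of ℚ M' w := by
  rw [finsum_mem_eq_finite_toFinset_sum _ hP, finsum_mem_eq_finite_toFinset_sum _ hQ,
    finsum_mem_eq_finite_toFinset_sum _ hR]
  rw [Finset.sum_mul_sum]
  rw [← Finset.sum_product']
  refine Finset.sum_bij (fun x _ => x.1 * x.2) ?_ ?_ ?_ ?_
  · rintro ⟨p, q⟩ hx
    simp only [Finset.mem_product, Set.Finite.mem_toFinset] at hx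
    simp only [Set.Finite.mem_toFinset]
    exact hmul p hx.1 q hx.2
  · rintro ⟨p, q⟩ hx ⟨p', q'⟩ hx' h
    simp only [Finset.mem_product, Set.Finite.mem_toFinset] at hx hx'
    obtain ⟨h1, h2⟩ := hinj p hx.1 q hx.2 p' hx'.1 q' hx'.2 h
    simp [h1, h2]
  · intro r hr
    simp only [Set.Finite.mem_toFinset] at hr
    obtain ⟨p, hp, q, hq, hpq⟩ := hsurj r hr
    exact ⟨⟨p, q⟩, by simp [Finset.mem_product, Set.Finite.mem_toFinset, hp, hq], hpq⟩
  · rintro ⟨p, q⟩ hx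
    exact (map_mul (MonoidAlgebra.of ℚ M') p q).symm

lemma Q_eq_Pow (n : ℕ) : Q n = ∑ᶠ w ∈ Pow n 1, MonoidAlgebra.of ℚ M' w := by
  have : lazardC n = Pow n 1 := by
    ext w
    constructor
    · intro hw
      exact ⟨[w], by simpa using hw, rfl, by simp⟩
    · rintro ⟨l, hl, hlen, rfl⟩
      obtain ⟨a, rfl⟩ := List.length_eq_one_iff.mp hlen
      simpa using hl a (by simp)
  rw [Q, this]

lemma Qpow (n : ℕ) (hn : 1 ≤ n) (k : ℕ) :
    Q n ^ k = ∑ᶠ w ∈ Pow n k, MonoidAlgebra.of ℚ M' w := by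
  induction k with
  | zero =>
    have : Pow n 0 = {1} := by
      ext w
      constructor
      · rintro ⟨l, _, hlen, rfl⟩
        rw [List.length_eq_zero_iff.mp hlen]
        rfl
      · rintro rfl
        exact ⟨[], by simp, rfl, rfl⟩
    rw [pow_zero, this, finsum_mem_singleton, map_one]
  | succ k ih =>
    have hcode := isCode_lazardZ n hn
    rw [pow_succ', ih, Q_eq_Pow]
    refine GH (finite_Pow n 1) (finite_Pow n k) (finite_Pow n (k + 1)) ?_ ?_ ?_
    · rintro p ⟨lp, hlp, hlenp, rfl⟩ q ⟨lq, hlq, hlenq, rfl⟩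
      refine ⟨lp ++ lq, ?_, by simp [hlenp, hlenq]; omega, by simp [List.prod_append]⟩
      intro x hx
      rcases List.mem_append.mp hx with hx | hx
      · exact hlp x hx
      · exact hlq x hx
    · rintro r ⟨l, hl, hlen, rfl⟩
      cases l with
      | nil => simp at hlen
      | cons a t =>
        refine ⟨a, ⟨[a], by simpa using hl a (by simp), rfl, by simp⟩,
          t.prod, ⟨t, fun x hx => hl x (by simp [hx]), by simpa using hlen, rfl⟩, by simp⟩
    · rintro p ⟨lp, hlp, hlenp, rfl⟩ q ⟨lq, hlq, hlenq, rfl⟩ p' ⟨lp', hlp', hlenp', rfl⟩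
        q' ⟨lq', hlq', hlenq', rfl⟩ h
      have h2 : lp ++ lq = lp' ++ lq' := by
        refine hcode _ _ ?_ ?_ ?_
        · intro x hx
          rcases List.mem_append.mp hx with hx | hx
          · exact (hlp x hx).1
          · exact (hlq x hx).1
        · intro x hx
          rcases List.mem_append.mp hx with hx | hx
          · exact (hlp' x hx).1
          · exact (hlq' x hx).1
        · simpa [List.prod_append] using h
      have hlen : lp.length = lp'.length := by rw [hlenp, hlenp']
      have h3 : lp = lp' ∧ lq = lq' := by
        constructor
        · exact List.append_inj_left h2 hlen
        · exact List.append_inj_right h2 hlen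
      rw [h3.1, h3.2]
      exact ⟨rfl, rfl⟩

lemma witness_extend {e : ℕ → ℕ} {t : ℕ} {a : M'} {f : ℕ → List M'} {l : List M'}
    (hf : WpWitness e t a f) (hl : ∀ x ∈ l, x ∈ lazardC (t + 1))
    (hlen : l.length = e (t + 1)) :
    WpWitness e (t + 1) (a * l.prod) (Function.update f (t + 1) l) := by
  obtain ⟨hf1, hf2, hf3, hf4⟩ := hf
  refine ⟨?_, ?_, ?_, ?_⟩
  · intro j x hx
    rcases eq_or_ne j (t + 1) with rfl | hj
    · rw [Function.update_self] at hx; exact hl x hx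
    · rw [Function.update_of_ne hj] at hx; exact hf1 j x hx
  · intro j hj
    rw [Function.update_of_ne (by omega)]
    exact hf2 j (by omega)
  · intro j h1 h2
    rcases eq_or_ne j (t + 1) with rfl | hj
    · rw [Function.update_self]; exact hlen
    · rw [Function.update_of_ne hj]; exact hf3 j h1 (by omega)
  · rw [List.range_succ]
    simp only [List.map_append, List.prod_append, List.map_cons, List.map_nil,
      List.prod_cons, List.prod_nil, mul_one]
    rw [Function.update_self]
    have hpre : ((List.range (t + 1)).map
        (fun j => (Function.update f (t + 1) l j).prod)).prod =
        ((List.range (t + 1)).map (fun j => (f j).prod)).prod := by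
      congr 1
      refine List.map_congr_left ?_
      intro j hj
      rw [Function.update_of_ne (by simp at hj; omega)]
    rw [hpre, hf4]

lemma Wp_mul_inj {e : ℕ → ℕ} {t : ℕ} :
    ∀ a ∈ Wp e t, ∀ b ∈ Pow (t + 1) (e (t + 1)), ∀ a' ∈ Wp e t,
    ∀ b' ∈ Pow (t + 1) (e (t + 1)), a * b = a' * b' → a = a' ∧ b = b' := by
  rintro a ha b ⟨l, hl, hlen, rfl⟩ a' ha' b' ⟨l', hl', hlen', rfl⟩ h
  obtain ⟨f, hf⟩ := (Wp_iff e t a).mp ha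
  obtain ⟨f', hf'⟩ := (Wp_iff e t a').mp ha'
  have hW : WpWitness e (t + 1) (a * l.prod) (Function.update f (t + 1) l) :=
    witness_extend hf hl hlen
  have hW' : WpWitness e (t + 1) (a * l.prod) (Function.update f' (t + 1) l') := by
    rw [h]; exact witness_extend hf' hl' hlen'
  have hFF := WpWitness_unique hW hW'
  have hll : l = l' := by
    have h1 := congrFun hFF (t + 1)
    rwa [Function.update_self, Function.update_self] at h1
  have haa : a = a' := by
    rw [← hf.2.2.2, ← hf'.2.2.2]
    congr 1
    refine List.map_congr_left ?_
    intro j hj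
    have hj' : j ≠ t + 1 := by simp at hj; omega
    have h2 := congrFun hFF j
    rw [Function.update_of_ne hj', Function.update_of_ne hj'] at h2
    rw [h2]
  exact ⟨haa, by rw [hll]⟩

lemma WpProd (e : ℕ → ℕ) : ∀ t : ℕ,
    ((List.range' 1 t).map (fun n => Q n ^ e n)).prod =
      ∑ᶠ w ∈ Wp e t, MonoidAlgebra.of ℚ M' w := by
  intro t
  induction t with
  | zero =>
    show (1 : MonoidAlgebra ℚ M') = _
    rw [show Wp e 0 = {1} from rfl, finsum_mem_singleton, map_one]
  | succ t ih =>
    have hsplit : List.range' 1 (t + 1) = List.range' 1 t ++ [1 + t] := by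
      have h := List.range'_append (s := 1) (m := t) (n := 1) (step := 1)
      simp only [one_mul] at h
      rw [← h]
      simp [List.range'_succ]
    rw [hsplit]
    simp only [List.map_append, List.prod_append, List.map_cons, List.map_nil,
      List.prod_cons, List.prod_nil, mul_one]
    rw [Nat.add_comm 1 t]
    rw [ih, Qpow (t + 1) (by omega) (e (t + 1))]
    refine GH (finite_Wp e t) (finite_Pow (t + 1) (e (t + 1))) (finite_Wp e (t + 1))
      ?_ ?_ Wp_mul_inj
    · intro p hp q hq
      exact ⟨p, hp, q, hq, rfl⟩
    · rintro r ⟨p, hp, q, hq, rfl⟩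
      exact ⟨p, hp, q, hq, rfl⟩

lemma exists_full_witness (N : ℕ) (w : M') (hw : w.wt = N) :
    ∃ f : ℕ → List M', WpWitness (fun j => (f j).length) N w f := by
  obtain ⟨⟨f, zl⟩, ⟨hp1, hp2, hp3, hp4⟩, _⟩ := master (N + 1) (by omega) w
  have hzl : zl = [] := by
    cases zl with
    | nil => rfl
    | cons z t =>
      exfalso
      have hz : N + 1 ≤ z.wt := wt_lazardZ (N + 1) (by omega) z (hp3 z (by simp))
      have : w.wt = (((List.range (N + 1)).map (fun j => ((f, z :: t).1 j).prod)).prod).wt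
          + z.wt + t.prod.wt := by
        rw [← hp4]
        simp only [wt_mul, List.prod_cons]
        ring
      omega
  subst hzl
  refine ⟨f, hp1, hp2, fun j _ _ => rfl, by simpa using hp4⟩

lemma E_finite (N : ℕ) :
    {e : ℕ → ℕ | e 0 = 0 ∧ (∀ n, N < n → e n = 0) ∧
      ∑ n ∈ Finset.range (N + 1), n * e n = N}.Finite := by
  set E := {e : ℕ → ℕ | e 0 = 0 ∧ (∀ n, N < n → e n = 0) ∧
      ∑ n ∈ Finset.range (N + 1), n * e n = N} with hE
  have hbound : ∀ e ∈ E, ∀ j, e j ≤ N := by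
    rintro e ⟨h0, hhigh, hsum⟩ j
    rcases Nat.eq_zero_or_pos j with rfl | hj
    · omega
    · rcases le_or_gt j N with hjN | hjN
      · have hmem : j ∈ Finset.range (N + 1) := Finset.mem_range.mpr (by omega)
        have := Finset.single_le_sum (f := fun n => n * e n) (fun i _ => Nat.zero_le _) hmem
        rw [hsum] at this
        nlinarith
      · rw [hhigh j hjN]; omega
  have himg : ((fun e : ℕ → ℕ => (fun i : Fin (N + 1) => e i)) '' E).Finite := by
    refine Set.Finite.subset (Set.Finite.pi (t := fun _ : Fin (N + 1) => Set.Iic N)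
      (fun _ => Set.finite_Iic N)) ?_
    rintro g ⟨e, he, rfl⟩
    intro i _
    exact hbound e he i
  refine Set.Finite.of_finite_image himg ?_
  rintro e he e' he' hgg
  funext j
  rcases le_or_gt j N with hjN | hjN
  · exact congrFun hgg ⟨j, by omega⟩
  · rw [he.2.1 j hjN, he'.2.1 j hjN]

lemma Wp_disjoint {N : ℕ} {e e' : ℕ → ℕ}
    (he : e 0 = 0 ∧ (∀ n, N < n → e n = 0) ∧ ∑ n ∈ Finset.range (N + 1), n * e n = N)
    (he' : e' 0 = 0 ∧ (∀ n, N < n → e' n = 0) ∧ ∑ n ∈ Finset.range (N + 1), n * e' n = N)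
    {w : M'} (hw : w ∈ Wp e N) (hw' : w ∈ Wp e' N) : e = e' := by
  obtain ⟨f, hf⟩ := (Wp_iff e N w).mp hw
  obtain ⟨f', hf'⟩ := (Wp_iff e' N w).mp hw'
  have hff := WpWitness_unique hf hf'
  funext j
  rcases Nat.eq_zero_or_pos j with rfl | hj
  · rw [he.1, he'.1]
  · rcases le_or_gt j N with hjN | hjN
    · rw [← hf.2.2.1 j hj hjN, ← hf'.2.2.1 j hj hjN, hff]
    · rw [he.2.1 j hjN, he'.2.1 j hjN]

end LazardAux

/-- The complete function `S_N = Σ_{ω(w)=N} w` decomposes as the sum of the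
products `Q_{n₁}^{e₁} ⋯ Q_{n_r}^{e_r}` over all `n₁ < ⋯ < n_r` and
`e₁, …, e_r ≥ 1` with `n₁e₁ + ⋯ + n_re_r = N`; such data are encoded by the
functions `e : ℕ → ℕ` with `e 0 = 0`, support contained in `{1, …, N}` and
`Σ n·e(n) = N`, the product being taken in increasing order of `n`. -/
theorem complete_eq_sum_of_Q_products (N : ℕ) (hN : 1 ≤ N) :
    (∑ᶠ w ∈ {w : FreeMonoid ℕ+ | w.wt = N}, MonoidAlgebra.of ℚ (FreeMonoid ℕ+) w) =
    ∑ᶠ e ∈ {e : ℕ → ℕ | e 0 = 0 ∧ (∀ n, N < n → e n = 0) ∧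
        ∑ n ∈ Finset.range (N + 1), n * e n = N},
      ((List.range' 1 N).map (fun n => Q n ^ e n)).prod := by
  classical
  have hEfin := LazardAux.E_finite N
  have hAfin := LazardAux.finite_wt_eq N
  have hbody : ∀ e ∈ {e : ℕ → ℕ | e 0 = 0 ∧ (∀ n, N < n → e n = 0) ∧
        ∑ n ∈ Finset.range (N + 1), n * e n = N},
      ((List.range' 1 N).map (fun n => Q n ^ e n)).prod
        = ∑ᶠ w ∈ LazardAux.Wp e N, MonoidAlgebra.of ℚ (FreeMonoid ℕ+) w := fun e _ => LazardAux.WpProd e N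
  rw [finsum_mem_congr rfl hbody]
  rw [finsum_mem_eq_finite_toFinset_sum _ hEfin, finsum_mem_eq_finite_toFinset_sum _ hAfin]
  rw [Finset.sum_congr rfl (fun e _ => finsum_mem_eq_finite_toFinset_sum
    (MonoidAlgebra.of ℚ (FreeMonoid ℕ+) : FreeMonoid ℕ+ → MonoidAlgebra ℚ (FreeMonoid ℕ+))
    (LazardAux.finite_Wp e N))]
  rw [← Finset.sum_biUnion ?hdisj]
  case hdisj =>
    intro e he e' he' hne
    rw [Function.onFun, Finset.disjoint_left]
    intro w hw hw'
    rw [Set.Finite.mem_toFinset] at hw hw'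
    simp only [Finset.mem_coe, Set.Finite.mem_toFinset] at he he'
    exact hne (LazardAux.Wp_disjoint he he' hw hw')
  congr 1
  ext w
  simp only [Finset.mem_biUnion, Set.Finite.mem_toFinset, Set.mem_setOf_eq]
  constructor
  · intro hw
    obtain ⟨f, hf⟩ := LazardAux.exists_full_witness N w hw
    set e := fun j => (f j).length with he
    have hmem : w ∈ LazardAux.Wp e N := (LazardAux.Wp_iff e N w).mpr ⟨f, hf⟩
    refine ⟨e, ⟨?_, ?_, ?_⟩, hmem⟩
    · rw [he]; simp only; rw [hf.2.1 0 (Or.inl rfl)]; rfl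
    · intro n hn
      rw [he]; simp only; rw [hf.2.1 n (Or.inr (by omega))]; rfl
    · rw [← LazardAux.wt_Wp hmem, hw]
  · rintro ⟨e, he, hw⟩
    rw [LazardAux.wt_Wp hw]
    exact he.2.2
end

section
/- Let M be the free monoid on the alphabet of positive integers {1, 2, 3, …}, with weight ω(n_1⋯n_r) = n_1 + ⋯ + n_r, and let C_n be the components of the Lazard right composition of (M, ω). In the monoid algebra ℚ[M], set Q_n = Σ_{w ∈ C_n} w. Then for every n ≥ 1, the single-letter word n, viewed as an element of ℚ[M], satisfies: n = Σ_{k≥1} (−1)^{k+1} Σ Q_{i_1}·Q_{i_2}⋯Q_{i_k}, where the inner sum ranges over all strictly decreasing sequences i_1 > i_2 > ⋯ > i_k of positive integers with i_1 + ⋯ + i_k = n. (This is the expansion of the noncommutative elementary symmetric function Λ̃_n on the basis of products of noncommutative Witt symmetric functions.) -/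
namespace LazAux

abbrev W := FreeMonoid ℕ+



lemma wt_mul (a b : W) : (a * b).wt = a.wt + b.wt := by
  simp [FreeMonoid.wt, FreeMonoid.toList_mul]

lemma wt_one : (1 : W).wt = 0 := rfl

lemma wt_of (a : ℕ+) : (FreeMonoid.of a).wt = a := by
  simp [FreeMonoid.wt, FreeMonoid.toList_of]

lemma wt_prod (l : List W) : l.prod.wt = (l.map FreeMonoid.wt).sum := by
  induction l with
  | nil => rfl
  | cons a t ih => simp [wt_mul, ih]

lemma toList_prod (l : List W) : l.prod.toList = (l.map FreeMonoid.toList).flatten := by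
  induction l with
  | nil => rfl
  | cons a t ih => simp [FreeMonoid.toList_mul, ih]

lemma wt_eq_zero_iff {w : W} : w.wt = 0 ↔ w = 1 := by
  constructor
  · intro h
    have h2 : ∀ x ∈ w.toList.map (fun x : ℕ+ => (x : ℕ)), x = 0 :=
      List.sum_eq_zero_iff.mp h
    have : w.toList = [] := by
      rcases hl : w.toList with _ | ⟨a, t⟩
      · rfl
      · exact absurd (h2 (a : ℕ) (by rw [hl]; simp)) (by have := a.pos; omega)
    exact FreeMonoid.toList.injective this
  · rintro rfl; rfl

/-- Finiteness of the set of positive lists with given sum, via `Composition`. -/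
lemma finite_pos_sum (k : ℕ) : {l : List ℕ | (∀ i ∈ l, 0 < i) ∧ l.sum = k}.Finite := by
  have h : {l : List ℕ | (∀ i ∈ l, 0 < i) ∧ l.sum = k} ⊆
      Set.range (fun c : Composition k => c.blocks) := by
    rintro l ⟨h1, h2⟩
    exact ⟨⟨l, fun hi => h1 _ hi, h2⟩, rfl⟩
  exact (Set.finite_range _).subset h

lemma finite_wt_eq (k : ℕ) : {w : W | w.wt = k}.Finite := by
  have hinj : Function.Injective (fun w : W => w.toList.map (fun x : ℕ+ => (x : ℕ))) := by
    intro a b h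
    exact FreeMonoid.toList.injective
      ((List.map_injective_iff.mpr (fun x y hxy => PNat.coe_injective hxy)) h)
  have hsub : {w : W | w.wt = k} ⊆
      (fun w : W => w.toList.map (fun x : ℕ+ => (x : ℕ))) ⁻¹'
        {l : List ℕ | (∀ i ∈ l, 0 < i) ∧ l.sum = k} := by
    intro w hw
    refine ⟨?_, hw⟩
    intro i hi
    simp only [List.mem_map] at hi
    obtain ⟨x, _, rfl⟩ := hi
    exact x.pos
  exact (((finite_pos_sum k).preimage hinj.injOn)).subset hsub




/-- Blocks: lists of the form `a :: cs` with `a ∈ A`, `cs` over `B`. -/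
def Blk (A B : Set W) (b : List W) : Prop :=
  ∃ a ∈ A, ∃ cs : List W, (∀ c ∈ cs, c ∈ B) ∧ b = a :: cs

lemma head_mem_A {A B : Set W} {L : List (List W)} (hL : ∀ b ∈ L, Blk A B b)
    {x : W} {r : List W} (h : L.flatten = x :: r) : x ∈ A := by
  induction L with
  | nil => simp at h
  | cons b T ih =>
    obtain ⟨a, ha, cs, hcs, rfl⟩ := hL b (List.mem_cons_self)
    simp only [List.flatten_cons, List.cons_append] at h
    obtain ⟨rfl, -⟩ := List.cons.injEq .. ▸ h
    · exact ha

lemma cancel_B {A B : Set W} (hAB : ∀ a ∈ A, a ∉ B) :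
    ∀ (cs₁ cs₂ : List W) (T₁ T₂ : List (List W)), (∀ c ∈ cs₁, c ∈ B) → (∀ c ∈ cs₂, c ∈ B) →
      (∀ b ∈ T₁, Blk A B b) → (∀ b ∈ T₂, Blk A B b) →
      cs₁ ++ T₁.flatten = cs₂ ++ T₂.flatten → cs₁ = cs₂ := by
  intro cs₁
  induction cs₁ with
  | nil =>
    rintro (_ | ⟨c₂, t₂⟩) T₁ T₂ h1 h2 hT1 hT2 h
    · rfl
    · exfalso
      simp only [List.nil_append] at h
      exact hAB _ (head_mem_A hT1 h) (h2 c₂ (List.mem_cons_self))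
  | cons c₁ t₁ ih =>
    rintro (_ | ⟨c₂, t₂⟩) T₁ T₂ h1 h2 hT1 hT2 h
    · exfalso
      simp only [List.nil_append, List.cons_append] at h
      exact hAB _ (head_mem_A hT2 h.symm) (h1 c₁ (List.mem_cons_self))
    · simp only [List.cons_append, List.cons.injEq] at h
      obtain ⟨rfl, h⟩ := h
      rw [ih t₂ T₁ T₂ (fun c hc => h1 c (List.mem_cons_of_mem _ hc))
        (fun c hc => h2 c (List.mem_cons_of_mem _ hc)) hT1 hT2 h]

lemma decode {A B : Set W} (hAB : ∀ a ∈ A, a ∉ B) :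
    ∀ (L₁ L₂ : List (List W)), (∀ b ∈ L₁, Blk A B b) → (∀ b ∈ L₂, Blk A B b) →
      L₁.flatten = L₂.flatten → L₁ = L₂ := by
  intro L₁
  induction L₁ with
  | nil =>
    rintro (_ | ⟨b₂, T₂⟩) h1 h2 h
    · rfl
    · exfalso
      obtain ⟨a, ha, cs, hcs, rfl⟩ := h2 _ (List.mem_cons_self)
      simp at h
  | cons b₁ T₁ ih =>
    rintro (_ | ⟨b₂, T₂⟩) h1 h2 h
    · exfalso
      obtain ⟨a, ha, cs, hcs, rfl⟩ := h1 _ (List.mem_cons_self)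
      simp at h
    · obtain ⟨a₁, ha₁, cs₁, hcs₁, rfl⟩ := h1 _ (List.mem_cons_self)
      obtain ⟨a₂, ha₂, cs₂, hcs₂, rfl⟩ := h2 _ (List.mem_cons_self)
      simp only [List.flatten_cons, List.cons_append, List.cons.injEq] at h
      obtain ⟨rfl, h⟩ := h
      have hT1 : ∀ b ∈ T₁, Blk A B b := fun b hb => h1 b (List.mem_cons_of_mem _ hb)
      have hT2 : ∀ b ∈ T₂, Blk A B b := fun b hb => h2 b (List.mem_cons_of_mem _ hb)
      have hcs : cs₁ = cs₂ := cancel_B hAB cs₁ cs₂ T₁ T₂ hcs₁ hcs₂ hT1 hT2 h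
      subst hcs
      have hf : T₁.flatten = T₂.flatten := List.append_cancel_left h
      rw [ih T₂ hT1 hT2 hf]

/-- A set of words is a code if factorizations over it are unique. -/
def IsCode (S : Set W) : Prop :=
  ∀ l₁ l₂ : List W, (∀ x ∈ l₁, x ∈ S) → (∀ x ∈ l₂, x ∈ S) → l₁.prod = l₂.prod → l₁ = l₂

lemma length_one_flatten {α : Type*} :
    ∀ (L₁ L₂ : List (List α)), (∀ b ∈ L₁, b.length = 1) → (∀ b ∈ L₂, b.length = 1) →
      L₁.flatten = L₂.flatten → L₁ = L₂ := by
  intro L₁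
  induction L₁ with
  | nil =>
    rintro (_ | ⟨b₂, T₂⟩) h1 h2 h
    · rfl
    · exfalso
      rcases List.length_eq_one_iff.mp (h2 _ (List.mem_cons_self)) with ⟨a, rfl⟩
      simp at h
  | cons b₁ T₁ ih =>
    rintro (_ | ⟨b₂, T₂⟩) h1 h2 h
    · exfalso
      rcases List.length_eq_one_iff.mp (h1 _ (List.mem_cons_self)) with ⟨a, rfl⟩
      simp at h
    · rcases List.length_eq_one_iff.mp (h1 _ (List.mem_cons_self)) with ⟨a₁, rfl⟩
      rcases List.length_eq_one_iff.mp (h2 _ (List.mem_cons_self)) with ⟨a₂, rfl⟩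
      simp only [List.flatten_cons, List.singleton_append, List.cons.injEq] at h
      obtain ⟨rfl, h⟩ := h
      rw [ih T₂ (fun b hb => h1 b (List.mem_cons_of_mem _ hb))
        (fun b hb => h2 b (List.mem_cons_of_mem _ hb)) h]





/-- The sets in the Lazard step. -/
def Am (m : ℕ) : Set W := {v | v ∈ lazardZ (m + 1) ∧ v.wt ≠ m + 1}
def Bm (m : ℕ) : Set W := {v | v ∈ lazardZ (m + 1) ∧ v.wt = m + 1}

lemma lazardZ_succ_succ (m : ℕ) :
    lazardZ (m + 2) =
      {w | ∃ z ∈ lazardZ (m + 1), z.wt ≠ m + 1 ∧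
        ∃ u ∈ Submonoid.closure (Bm m), w = z * u} := rfl

lemma Bm_eq (m : ℕ) : Bm m = lazardC (m + 1) := rfl

lemma hAB (m : ℕ) : ∀ a ∈ Am m, a ∉ Bm m := fun a ha hb => ha.2 hb.2

lemma wt_lower : ∀ m, ∀ w ∈ lazardZ (m + 1), m + 1 ≤ w.wt := by
  intro m
  induction m with
  | zero =>
    rintro w ⟨a, rfl⟩
    rw [wt_of]; exact a.pos
  | succ n ih =>
    rintro w ⟨z, hz, hwt, u, hu, rfl⟩
    have h1 : n + 1 ≤ z.wt := ih z hz
    have h2 : n + 2 ≤ z.wt := by omega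
    rw [wt_mul]; omega

/-- Every element of `Z_{m+2}` has a block factorization over `Z_{m+1}`. -/
lemma spell (m : ℕ) : ∀ z ∈ lazardZ (m + 2),
    ∃ b : List W, Blk (Am m) (Bm m) b ∧ b.prod = z := by
  rintro w ⟨z, hz, hwt, u, hu, rfl⟩
  obtain ⟨cs, hcs, rfl⟩ := Submonoid.exists_list_of_mem_closure hu
  exact ⟨z :: cs, ⟨z, ⟨hz, hwt⟩, cs, hcs, rfl⟩, by simp⟩

/-- A block over `Z_{m+1}` multiplies into `Z_{m+2}` (with extra B-letters appended). -/
lemma blk_prod_mem (m : ℕ) {b : List W} (hb : Blk (Am m) (Bm m) b) :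
    b.prod ∈ lazardZ (m + 2) := by
  obtain ⟨a, ha, cs, hcs, rfl⟩ := hb
  refine ⟨a, ha.1, ha.2, cs.prod, ?_, by simp⟩
  exact list_prod_mem (fun c hc => Submonoid.subset_closure (hcs c hc))

/-- Right multiplication by an element of `C_{m+1}` stays in `Z_{m+2}`. -/
lemma mul_c_mem (m : ℕ) {z c : W} (hz : z ∈ lazardZ (m + 2)) (hc : c ∈ Bm m) :
    z * c ∈ lazardZ (m + 2) := by
  obtain ⟨z₀, hz₀, hwt, u, hu, rfl⟩ := hz
  exact ⟨z₀, hz₀, hwt, u * c, mul_mem hu (Submonoid.subset_closure hc), mul_assoc _ _ _⟩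

lemma code_Z : ∀ m, IsCode (lazardZ (m + 1)) := by
  intro m
  induction m with
  | zero =>
    intro l₁ l₂ h1 h2 h
    have key : ∀ l : List W, (∀ x ∈ l, x ∈ lazardZ 1) → ∀ b ∈ l.map (fun w : W => FreeMonoid.toList w),
        b.length = 1 := by
      rintro l hl b hb
      simp only [List.mem_map] at hb
      obtain ⟨x, hx, rfl⟩ := hb
      obtain ⟨a, rfl⟩ := hl x hx
      simp [FreeMonoid.toList_of]
    have hfl : (l₁.map (fun w : W => FreeMonoid.toList w)).flatten = (l₂.map (fun w : W => FreeMonoid.toList w)).flatten := by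
      have : ∀ l : List W, (l.map (fun w : W => FreeMonoid.toList w)).flatten = l.prod.toList := by
        intro l; induction l with
        | nil => rfl
        | cons a t ih =>
          rw [List.map_cons, List.flatten_cons, ih, List.prod_cons, FreeMonoid.toList_mul]
      rw [this, this, h]
    have := length_one_flatten (l₁.map (fun w : W => FreeMonoid.toList w)) (l₂.map (fun w : W => FreeMonoid.toList w)) (key l₁ h1) (key l₂ h2) hfl
    exact List.map_injective_iff.mpr (fun a b hab => FreeMonoid.toList.injective hab) this
  | succ n ih =>
    intro l₁ l₂ h1 h2 h
    classical
    -- choose a block for each element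
    have hspell := spell n
    let f : W → List W := fun z =>
      if hz : z ∈ lazardZ (n + 2) then (hspell z hz).choose else []
    have hf : ∀ z ∈ lazardZ (n + 2), Blk (Am n) (Bm n) (f z) ∧ (f z).prod = z := by
      intro z hz
      simp only [f, dif_pos hz]
      exact (hspell z hz).choose_spec
    have hmapprod : ∀ l : List W, (∀ x ∈ l, x ∈ lazardZ (n + 2)) →
        ((l.map f).map List.prod) = l := by
      intro l hl
      rw [List.map_map]
      conv_rhs => rw [← List.map_id l]
      exact List.map_congr_left (fun x hx => (hf x (hl x hx)).2)
    have hblk : ∀ l : List W, (∀ x ∈ l, x ∈ lazardZ (n + 2)) →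
        ∀ b ∈ l.map f, Blk (Am n) (Bm n) b := by
      intro l hl b hb
      simp only [List.mem_map] at hb
      obtain ⟨x, hx, rfl⟩ := hb
      exact (hf x (hl x hx)).1
    have hmem : ∀ l : List W, (∀ x ∈ l, x ∈ lazardZ (n + 2)) →
        ∀ x ∈ (l.map f).flatten, x ∈ lazardZ (n + 1) := by
      intro l hl x hx
      rw [List.mem_flatten] at hx
      obtain ⟨b, hb, hxb⟩ := hx
      obtain ⟨a, ha, cs, hcs, rfl⟩ := hblk l hl b hb
      rcases List.mem_cons.mp hxb with rfl | hxc
      · exact ha.1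
      · exact (hcs x hxc).1
    have hprod : ∀ l : List W, ((l.map f).flatten).prod = ((l.map f).map List.prod).prod :=
      fun l => List.prod_flatten
    have hpp : ((l₁.map f).flatten).prod = ((l₂.map f).flatten).prod := by
      rw [hprod, hprod, hmapprod l₁ h1, hmapprod l₂ h2, h]
    have hfl := ih _ _ (hmem l₁ h1) (hmem l₂ h2) hpp
    have hL := decode (hAB n) _ _ (hblk l₁ h1) (hblk l₂ h2) hfl
    calc l₁ = (l₁.map f).map List.prod := (hmapprod l₁ h1).symm
    _ = (l₂.map f).map List.prod := by rw [hL]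
    _ = l₂ := hmapprod l₂ h2





/-- Weight-`k` layer of `Z_m`. -/
def Zc (m k : ℕ) : Set W := {w | w ∈ lazardZ m ∧ w.wt = k}

noncomputable def Zs (m k : ℕ) : MonoidAlgebra ℚ W :=
  ∑ᶠ w ∈ Zc m k, MonoidAlgebra.of ℚ W w

lemma fin_Zc (m k : ℕ) : (Zc m k).Finite :=
  (finite_wt_eq k).subset (fun _ h => h.2)

lemma fin_Bm (m : ℕ) : (Bm m).Finite :=
  (finite_wt_eq (m + 1)).subset (fun _ h => h.2)

lemma blk_elems_mem {m : ℕ} {b : List W} (hb : Blk (Am m) (Bm m) b) :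
    ∀ x ∈ b, x ∈ lazardZ (m + 1) := by
  obtain ⟨a, ha, cs, hcs, rfl⟩ := hb
  intro x hx
  rcases List.mem_cons.mp hx with rfl | hxc
  · exact ha.1
  · exact (hcs x hxc).1

/-- Injectivity of `(z, c) ↦ z * c` on `Z_{m+2} × C_{m+1}`. -/
lemma mul_injOn (m : ℕ) {S : Set W} (hS : S ⊆ lazardZ (m + 2)) :
    Set.InjOn (fun p : W × W => p.1 * p.2) (S ×ˢ Bm m) := by
  rintro ⟨z, c⟩ ⟨hz, hc⟩ ⟨z', c'⟩ ⟨hz', hc'⟩ h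
  obtain ⟨b, hb, hbz⟩ := spell m z (hS hz)
  obtain ⟨b', hb', hbz'⟩ := spell m z' (hS hz')
  have hp : (b ++ [c]).prod = (b' ++ [c']).prod := by
    simp only [List.prod_append, List.prod_cons, List.prod_nil, mul_one, hbz, hbz']
    exact h
  have hmem : ∀ x ∈ b ++ [c], x ∈ lazardZ (m + 1) := by
    intro x hx
    rcases List.mem_append.mp hx with hx | hx
    · exact blk_elems_mem hb x hx
    · rw [List.mem_singleton.mp hx]; exact hc.1
  have hmem' : ∀ x ∈ b' ++ [c'], x ∈ lazardZ (m + 1) := by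
    intro x hx
    rcases List.mem_append.mp hx with hx | hx
    · exact blk_elems_mem hb' x hx
    · rw [List.mem_singleton.mp hx]; exact hc'.1
  have heq := code_Z m _ _ hmem hmem' hp
  obtain ⟨h1, h2⟩ := List.append_inj' heq rfl
  have : z = z' := by rw [← hbz, ← hbz', h1]
  have hcc : c = c' := by simpa using h2
  simp [this, hcc]

/-- An element of `Z_{m+2}·C_{m+1}` is not in `Z_{m+1}`. -/
lemma not_mem_Z_succ {m : ℕ} {z c : W} (hz : z ∈ lazardZ (m + 2)) (hc : c ∈ Bm m)
    (hw : z * c ∈ lazardZ (m + 1)) : False := by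
  obtain ⟨b, hb, hbz⟩ := spell m z hz
  have hp : ([z * c] : List W).prod = (b ++ [c]).prod := by
    simp [List.prod_append, hbz]
  have hmem : ∀ x ∈ ([z * c] : List W), x ∈ lazardZ (m + 1) := by
    intro x hx; rw [List.mem_singleton.mp hx]; exact hw
  have hmem' : ∀ x ∈ b ++ [c], x ∈ lazardZ (m + 1) := by
    intro x hx
    rcases List.mem_append.mp hx with hx | hx
    · exact blk_elems_mem hb x hx
    · rw [List.mem_singleton.mp hx]; exact hc.1
  have heq := code_Z m _ _ hmem hmem' hp
  obtain ⟨a, ha, cs, hcs, rfl⟩ := hb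
  have := congrArg List.length heq
  simp at this

/-- The key set-level identity of the Lazard step, restricted to weight `k`. -/
lemma key_sets (m k : ℕ) :
    Zc (m + 1) k ∪ (fun p : W × W => p.1 * p.2) '' (Zc (m + 2) (k - (m + 1)) ×ˢ Bm m) =
      (if k = m + 1 then Bm m else ∅) ∪ Zc (m + 2) k := by
  ext w
  constructor
  · rintro (⟨hw, hwt⟩ | ⟨⟨z, c⟩, ⟨⟨hz, hzw⟩, hc⟩, rfl⟩)
    · by_cases hk : k = m + 1
      · left; rw [if_pos hk]; exact ⟨hw, by omega⟩
      · right
        refine ⟨⟨w, hw, by omega, 1, one_mem _, (mul_one w).symm⟩, hwt⟩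
    · right
      have h1 : m + 2 ≤ z.wt := wt_lower (m + 1) z hz
      have h2 : z.wt = k - (m + 1) := hzw
      have hck : (z * c).wt = k := by
        rw [wt_mul, hc.2]; omega
      exact ⟨mul_c_mem m hz hc, hck⟩
  · rintro (hw | ⟨hw, hwt⟩)
    · rw [Set.mem_ite_empty_right] at hw
      obtain ⟨rfl, hw⟩ := hw
      exact Or.inl ⟨hw.1, hw.2⟩
    · obtain ⟨z, hz, hzwt, u, hu, rfl⟩ := hw
      obtain ⟨cs, hcs, rfl⟩ := Submonoid.exists_list_of_mem_closure hu
      rcases cs.eq_nil_or_concat with rfl | ⟨t, c, rfl⟩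
      · left
        exact ⟨by simpa using hz, hwt⟩
      · right
        simp only [List.concat_eq_append] at hwt hu hcs ⊢
        have hc : c ∈ Bm m := hcs c (by simp)
        have ht : ∀ x ∈ t, x ∈ Bm m := fun x hx => hcs x (by simp [hx])
        have hz' : z * t.prod ∈ lazardZ (m + 2) :=
          ⟨z, hz, hzwt, t.prod, list_prod_mem (fun x hx => Submonoid.subset_closure (ht x hx)), rfl⟩
        have hassoc : z * (t ++ [c]).prod = (z * t.prod) * c := by
          simp [List.prod_append, mul_assoc]
        have hwtz : (z * t.prod).wt = k - (m + 1) := by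
          have h9 : (z * (t ++ [c]).prod).wt = (z * t.prod).wt + (m + 1) := by
            rw [hassoc, wt_mul, hc.2]
          rw [hwt] at h9
          omega
        exact ⟨(z * t.prod, c), ⟨⟨hz', hwtz⟩, hc⟩, hassoc.symm⟩

lemma disj_left (m k : ℕ) :
    Disjoint (Zc (m + 1) k) ((fun p : W × W => p.1 * p.2) '' (Zc (m + 2) (k - (m + 1)) ×ˢ Bm m)) := by
  rw [Set.disjoint_left]
  rintro w ⟨hw, _⟩ ⟨⟨z, c⟩, ⟨⟨hz, _⟩, hc⟩, rfl⟩
  exact not_mem_Z_succ hz hc hw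

lemma disj_right (m k : ℕ) :
    Disjoint (if k = m + 1 then Bm m else (∅ : Set W)) (Zc (m + 2) k) := by
  split_ifs with hk
  · subst hk
    rw [Set.disjoint_left]
    rintro w ⟨_, hwt⟩ ⟨hw, hwk⟩
    have := wt_lower (m + 1) w hw
    omega
  · exact disjoint_bot_left

lemma sum_image_mul (m : ℕ) {S : Set W} (hS : S ⊆ lazardZ (m + 2)) (hSf : S.Finite) :
    (∑ᶠ w ∈ (fun p : W × W => p.1 * p.2) '' (S ×ˢ Bm m), MonoidAlgebra.of ℚ W w) =
      (∑ᶠ w ∈ S, MonoidAlgebra.of ℚ W w) * (∑ᶠ w ∈ Bm m, MonoidAlgebra.of ℚ W w) := by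
  classical
  rw [finsum_mem_image (mul_injOn m hS)]
  rw [finsum_mem_eq_finite_toFinset_sum _ (hSf.prod (fin_Bm m)),
    finsum_mem_eq_finite_toFinset_sum _ hSf,
    finsum_mem_eq_finite_toFinset_sum _ (fin_Bm m)]
  rw [← Set.Finite.toFinset_prod hSf (fin_Bm m)]
  rw [Finset.sum_mul_sum]
  rw [Finset.sum_product]
  simp [map_mul]

/-- The algebraic Lazard step identity, weight by weight. -/
lemma step (m k : ℕ) :
    Zs (m + 1) k + Zs (m + 2) (k - (m + 1)) * Q (m + 1) =
      (if k = m + 1 then Q (m + 1) else 0) + Zs (m + 2) k := by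
  classical
  have hQ : Q (m + 1) = ∑ᶠ w ∈ Bm m, MonoidAlgebra.of ℚ W w := rfl
  have himgf : ((fun p : W × W => p.1 * p.2) '' (Zc (m + 2) (k - (m + 1)) ×ˢ Bm m)).Finite :=
    (((fin_Zc (m + 2) (k - (m + 1))).prod (fin_Bm m)).image _)
  have h1 :
      (∑ᶠ w ∈ (Zc (m + 1) k ∪ (fun p : W × W => p.1 * p.2) ''
          (Zc (m + 2) (k - (m + 1)) ×ˢ Bm m)), MonoidAlgebra.of ℚ W w) =
        Zs (m + 1) k + Zs (m + 2) (k - (m + 1)) * Q (m + 1) := by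
    rw [finsum_mem_union (disj_left m k) (fin_Zc (m + 1) k) himgf]
    rw [sum_image_mul m (fun w hw => hw.1) (fin_Zc (m + 2) (k - (m + 1)))]
    rfl
  have h2 :
      (∑ᶠ w ∈ ((if k = m + 1 then Bm m else ∅) ∪ Zc (m + 2) k), MonoidAlgebra.of ℚ W w) =
        (if k = m + 1 then Q (m + 1) else 0) + Zs (m + 2) k := by
    have hfin : (if k = m + 1 then Bm m else (∅ : Set W)).Finite := by
      split_ifs
      · exact fin_Bm m
      · exact Set.finite_empty
    rw [finsum_mem_union (disj_right m k) hfin (fin_Zc (m + 2) k)]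
    have h3 : (∑ᶠ w ∈ (if k = m + 1 then Bm m else (∅ : Set W)), MonoidAlgebra.of ℚ W w) =
        (if k = m + 1 then Q (m + 1) else 0) := by
      split_ifs
      · exact hQ.symm
      · exact finsum_mem_empty
    rw [h3]
    rfl
  rw [← h1, ← h2, key_sets m k]





/-- Index sets for the alternating sum. -/
def Lset (m k : ℕ) : Set (List ℕ) :=
  {l | l ≠ [] ∧ l.Chain' (· > ·) ∧ (∀ i ∈ l, m ≤ i) ∧ l.sum = k}

noncomputable def Ls (m k : ℕ) : MonoidAlgebra ℚ W :=
  ∑ᶠ l ∈ Lset m k, ((-1 : ℚ) ^ (l.length + 1)) • ((l.map Q).prod)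

lemma fin_Lset (m k : ℕ) (hm : 1 ≤ m) : (Lset m k).Finite :=
  (finite_pos_sum k).subset (fun l hl => ⟨fun i hi => lt_of_lt_of_le hm (hl.2.2.1 i hi), hl.2.2.2⟩)

lemma Lset_empty {m k : ℕ} (h : k < m) : Lset m k = ∅ := by
  ext l
  simp only [Lset, Set.mem_setOf_eq, Set.mem_empty_iff_false, iff_false, not_and]
  rintro hne _ hge hsum
  rcases l with _ | ⟨i, t⟩
  · exact hne rfl
  · have h1 : m ≤ i := hge i (List.mem_cons_self)
    have h2 : (i :: t).sum = i + t.sum := List.sum_cons ..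
    omega

lemma Ls_zero {m k : ℕ} (h : k < m) : Ls m k = 0 := by
  rw [Ls, Lset_empty h, finsum_mem_empty]

lemma Zs_zero {m k : ℕ} (h : k < m + 1) : Zs (m + 1) k = 0 := by
  have : Zc (m + 1) k = ∅ := by
    ext w
    simp only [Zc, Set.mem_setOf_eq, Set.mem_empty_iff_false, iff_false, not_and]
    intro hw hwt
    have := wt_lower m w hw
    omega
  rw [Zs, this, finsum_mem_empty]

lemma Lset_singleton (m : ℕ) : Lset (m + 1) (m + 1) = {[m + 1]} := by
  ext l
  simp only [Lset, Set.mem_setOf_eq, Set.mem_singleton_iff]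
  constructor
  · rintro ⟨hne, hch, hge, hsum⟩
    rcases l with _ | ⟨i, t⟩
    · exact absurd rfl hne
    · have h1 : m + 1 ≤ i := hge i (List.mem_cons_self)
      have h2 : (i :: t).sum = i + t.sum := List.sum_cons ..
      have ht : t = [] := by
        rcases t with _ | ⟨j, t'⟩
        · rfl
        · exfalso
          have : m + 1 ≤ j := hge j (by simp)
          have : (j :: t').sum = j + t'.sum := List.sum_cons ..
          omega
      subst ht
      simp at hsum ⊢
      omega
  · rintro rfl
    exact ⟨by simp, List.isChain_singleton _, by simp, by simp⟩

/-- The key partition of the index sets. -/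
lemma Lset_split (m k : ℕ) (hk : m + 1 < k) :
    Lset (m + 1) k = Lset (m + 2) k ∪ (fun l : List ℕ => l ++ [m + 1]) '' Lset (m + 2) (k - (m + 1)) := by
  ext l
  constructor
  · rintro ⟨hne, hch, hge, hsum⟩
    change List.IsChain _ _ at hch; rw [List.isChain_iff_pairwise] at hch
    by_cases hmem : (m + 1) ∈ l
    · right
      obtain ⟨l₁, l₂, rfl⟩ := List.append_of_mem hmem
      rw [List.pairwise_append] at hch
      have hl₂ : l₂ = [] := by
        rcases l₂ with _ | ⟨j, t⟩
        · rfl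
        · exfalso
          have h1 : m + 1 > j := (List.pairwise_cons.mp hch.2.1).1 j (by simp)
          have h2 : m + 1 ≤ j := hge j (by simp)
          omega
      subst hl₂
      have hgt : ∀ x ∈ l₁, x > m + 1 := fun x hx => hch.2.2 x hx (m + 1) (by simp)
      have hsum' : l₁.sum + (m + 1) = k := by
        simpa using hsum
      have hne₁ : l₁ ≠ [] := by
        rintro rfl
        simp at hsum'
        omega
      exact ⟨l₁, ⟨hne₁, List.isChain_iff_pairwise.mpr hch.1, fun i hi => hgt i hi, by omega⟩, rfl⟩
    · left
      refine ⟨hne, List.isChain_iff_pairwise.mpr hch, fun i hi => ?_, hsum⟩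
      have h1 := hge i hi
      have h2 : i ≠ m + 1 := fun h => hmem (h ▸ hi)
      omega
  · rintro (⟨hne, hch, hge, hsum⟩ | ⟨l', ⟨hne, hch, hge, hsum⟩, rfl⟩)
    · exact ⟨hne, hch, fun i hi => by have := hge i hi; omega, hsum⟩
    · change List.IsChain _ _ at hch; rw [List.isChain_iff_pairwise] at hch
      refine ⟨by simp, ?_, ?_, ?_⟩
      · change List.IsChain _ _; rw [List.isChain_iff_pairwise, List.pairwise_append]
        refine ⟨hch, List.pairwise_singleton _ _, fun x hx y hy => ?_⟩
        rw [List.mem_singleton.mp hy]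
        have := hge x hx
        omega
      · intro i hi
        rcases List.mem_append.mp hi with hi | hi
        · have := hge i hi; omega
        · rw [List.mem_singleton.mp hi]
      · rw [List.sum_append, hsum]
        simp
        omega

lemma Lset_disj (m k : ℕ) :
    Disjoint (Lset (m + 2) k) ((fun l : List ℕ => l ++ [m + 1]) '' Lset (m + 2) (k - (m + 1))) := by
  rw [Set.disjoint_left]
  rintro l ⟨_, _, hge, _⟩ ⟨l', _, rfl⟩
  have := hge (m + 1) (by simp)
  omega

/-- The list-side analogue of the Lazard step identity. -/
lemma Lstep (m k : ℕ) :
    Ls (m + 1) k + Ls (m + 2) (k - (m + 1)) * Q (m + 1) =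
      (if k = m + 1 then Q (m + 1) else 0) + Ls (m + 2) k := by
  classical
  rcases lt_trichotomy k (m + 1) with hk | rfl | hk
  · rw [Ls_zero hk, Ls_zero (by omega : k < m + 2),
      Ls_zero (show k - (m + 1) < m + 2 by omega), if_neg (by omega)]
    simp
  · rw [Ls_zero (by omega : m + 1 < m + 2), Ls_zero (show m + 1 - (m + 1) < m + 2 by omega),
      if_pos rfl]
    have : Ls (m + 1) (m + 1) = Q (m + 1) := by
      rw [Ls, Lset_singleton, finsum_mem_singleton]
      simp
    rw [this]
    simp
  · rw [if_neg (by omega)]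
    have himg : ((fun l : List ℕ => l ++ [m + 1]) '' Lset (m + 2) (k - (m + 1))).Finite :=
      ((fin_Lset _ _ (by omega)).image _)
    have hinj : Set.InjOn (fun l : List ℕ => l ++ [m + 1]) (Lset (m + 2) (k - (m + 1))) :=
      (List.append_left_injective [m + 1]).injOn
    have h1 : Ls (m + 1) k = Ls (m + 2) k +
        ∑ᶠ l ∈ (fun l : List ℕ => l ++ [m + 1]) '' Lset (m + 2) (k - (m + 1)),
          ((-1 : ℚ) ^ (l.length + 1)) • ((l.map Q).prod) := by
      rw [Ls, Lset_split m k hk,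
        finsum_mem_union (Lset_disj m k) (fin_Lset _ _ (by omega)) himg]
      rfl
    have h2 : (∑ᶠ l ∈ (fun l : List ℕ => l ++ [m + 1]) '' Lset (m + 2) (k - (m + 1)),
        ((-1 : ℚ) ^ (l.length + 1)) • ((l.map Q).prod)) =
        -(Ls (m + 2) (k - (m + 1)) * Q (m + 1)) := by
      rw [finsum_mem_image hinj]
      have hterm : ∀ l' : List ℕ,
          ((-1 : ℚ) ^ ((l' ++ [m + 1]).length + 1)) • (((l' ++ [m + 1]).map Q).prod) =
          -(((-1 : ℚ) ^ (l'.length + 1)) • ((l'.map Q).prod) * Q (m + 1)) := by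
        intro l'
        rw [List.map_append, List.prod_append]
        simp only [List.length_append, List.length_singleton, List.map_cons, List.map_nil,
          List.prod_cons, List.prod_nil, mul_one]
        rw [pow_succ]
        rw [smul_mul_assoc]
        rw [mul_smul]
        simp [neg_smul]
      rw [finsum_mem_congr rfl (fun l' _ => hterm l')]
      rw [Ls, finsum_mem_eq_finite_toFinset_sum _ (fin_Lset (m + 2) (k - (m + 1)) (by omega)),
        finsum_mem_eq_finite_toFinset_sum _ (fin_Lset (m + 2) (k - (m + 1)) (by omega))]
      simp only [← neg_mul]
      rw [← Finset.sum_mul, Finset.sum_neg_distrib]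
    rw [h1, h2]
    abel

/-- Main induction. -/
lemma main : ∀ d k m, k < m + 1 + d → Zs (m + 1) k = Ls (m + 1) k := by
  intro d
  induction d with
  | zero =>
    intro k m hk
    rw [Zs_zero (by omega), Ls_zero (by omega)]
  | succ d ih =>
    intro k m hk
    by_cases h : k < m + 1
    · rw [Zs_zero (by omega), Ls_zero (by omega)]
    · have h1 := step m k
      have h2 := Lstep m k
      have e1 : Zs (m + 2) k = Ls (m + 2) k := ih k (m + 1) (by omega)
      have e2 : Zs (m + 2) (k - (m + 1)) = Ls (m + 2) (k - (m + 1)) :=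
        ih (k - (m + 1)) (m + 1) (by omega)
      rw [e1, e2] at h1
      rw [← h2] at h1
      exact add_right_cancel h1


end LazAux

/-- The expansion of the elementary symmetric function `Λ̃_n` (the single-letter
word `n`) on the basis of products of Witt symmetric functions: the sum of
`(−1)^{k+1} Q_{i₁}⋯Q_{i_k}` over all strictly decreasing sequences
`i₁ > ⋯ > i_k` of positive integers with `i₁ + ⋯ + i_k = n`, such sequences
being encoded as lists. -/
theorem elementary_eq_alternating_sum_of_Q_products (n : ℕ) (hn : 1 ≤ n) :
    MonoidAlgebra.of ℚ (FreeMonoid ℕ+) (FreeMonoid.of ⟨n, hn⟩) =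
    ∑ᶠ l ∈ {l : List ℕ | l ≠ [] ∧ l.Chain' (· > ·) ∧ (∀ i ∈ l, 1 ≤ i) ∧
        l.sum = n},
      ((-1 : ℚ) ^ (l.length + 1)) • ((l.map Q).prod) := by
  classical
  have hset : LazAux.Zc 1 n = {FreeMonoid.of ⟨n, hn⟩} := by
    ext w
    constructor
    · rintro ⟨⟨a, rfl⟩, hwt⟩
      rw [LazAux.wt_of] at hwt
      have ha : a = ⟨n, hn⟩ := PNat.coe_injective (hwt.trans (PNat.mk_coe n hn).symm)
      rw [ha]
      rfl
    · rintro rfl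
      exact ⟨⟨_, rfl⟩, LazAux.wt_of ⟨n, hn⟩⟩
  calc MonoidAlgebra.of ℚ (FreeMonoid ℕ+) (FreeMonoid.of ⟨n, hn⟩)
      = LazAux.Zs 1 n := by rw [LazAux.Zs, hset, finsum_mem_singleton]
    _ = LazAux.Ls 1 n := LazAux.main n n 0 (by omega)
    _ = _ := rfl
end
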